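/- Let M be a manifold with geodesically complete metric g, X a tame vector field on M with compact set K, constant ε > 0 and Lyapunov function F. Then every flow line y: ℝ → M of ∂_s y = X(y) with nonempty ω-limit sets at both ends satisfies d(y(s), K) ≤ 2m/ε for all s, where m = sup_{x∈K}|F(x)|. Consequently the set S_X of traces of such flow lines is contained in the compact set K' = {x : d(x,K) ≤ 2m/ε}, and S_X is compact. -/

import Mathlib

open Filter Metric Set
open scoped RealInnerProductSpace Topology

set_option linter.unusedSectionVars false

section Aux

variable {E : Type*} [NormedAddCommGroup E] [InnerProductSpace ℝ E]
variable {X : E → E} {F : E → ℝ} {K : Set E} {ε : ℝ} {y : ℝ → E}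

lemma flow_deriv (hF : Differentiable ℝ F) (hy : ∀ s, HasDerivAt y (X (y s)) s) (s : ℝ) :
    HasDerivAt (fun t => F (y t)) (fderiv ℝ F (y s) (X (y s))) s :=
  (hF (y s)).hasFDerivAt.comp_hasDerivAt s (hy s)

lemma flow_cont (hy : ∀ s, HasDerivAt y (X (y s)) s) : Continuous y :=
  continuous_iff_continuousAt.2 fun s => (hy s).continuousAt

lemma flow_antitone (hF : Differentiable ℝ F) (hy : ∀ s, HasDerivAt y (X (y s)) s)
    (hlyap : ∀ x, fderiv ℝ F x (X x) ≤ 0) : Antitone fun t => F (y t) := by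
  refine antitone_of_deriv_nonpos (fun s => (flow_deriv hF hy s).differentiableAt) fun s => ?_
  rw [(flow_deriv hF hy s).deriv]
  exact hlyap (y s)

lemma anti_cluster_atTop {g : ℝ → ℝ} {L : ℝ} (hg : Antitone g)
    (hc : MapClusterPt L atTop g) : (∀ t, L ≤ g t) ∧ Tendsto g atTop (𝓝 L) := by
  have hlb : ∀ t, L ≤ g t := by
    intro t
    by_contra hlt
    push_neg at hlt
    have h1 : ∃ᶠ a in atTop, g a ∈ Ioi (g t) :=
      mapClusterPt_iff_frequently.1 hc _ (Ioi_mem_nhds hlt)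
    have h2 : ∀ᶠ a : ℝ in atTop, g a ≤ g t :=
      eventually_atTop.2 ⟨t, fun a ha => hg ha⟩
    obtain ⟨a, ha1, ha2⟩ := (h1.and_eventually h2).exists
    exact absurd ha2 (not_le.2 ha1)
  have hbb : BddBelow (range g) := ⟨L, by rintro _ ⟨t, rfl⟩; exact hlb t⟩
  have htd := tendsto_atTop_ciInf hg hbb
  have hLI : L = ⨅ t, g t := by
    have hc' : ClusterPt L (map g atTop) := hc
    have hne : (𝓝 L ⊓ 𝓝 (⨅ t, g t)).NeBot :=
      hc'.neBot.mono (inf_le_inf_left _ htd)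
    exact eq_of_nhds_neBot hne
  exact ⟨hlb, hLI ▸ htd⟩

lemma anti_cluster_atBot {g : ℝ → ℝ} {L : ℝ} (hg : Antitone g)
    (hc : MapClusterPt L atBot g) : (∀ t, g t ≤ L) ∧ Tendsto g atBot (𝓝 L) := by
  have hub : ∀ t, g t ≤ L := by
    intro t
    by_contra hlt
    push_neg at hlt
    have h1 : ∃ᶠ a in atBot, g a ∈ Iio (g t) :=
      mapClusterPt_iff_frequently.1 hc _ (Iio_mem_nhds hlt)
    have h2 : ∀ᶠ a : ℝ in atBot, g t ≤ g a :=
      eventually_atBot.2 ⟨t, fun a ha => hg ha⟩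
    obtain ⟨a, ha1, ha2⟩ := (h1.and_eventually h2).exists
    exact absurd ha2 (not_le.2 ha1)
  have hbb : BddAbove (range g) := ⟨L, by rintro _ ⟨t, rfl⟩; exact hub t⟩
  have htd := tendsto_atBot_ciSup hg hbb
  have hLI : L = ⨆ t, g t := by
    have hc' : ClusterPt L (map g atBot) := hc
    have hne : (𝓝 L ⊓ 𝓝 (⨆ t, g t)).NeBot :=
      hc'.neBot.mono (inf_le_inf_left _ htd)
    exact eq_of_nhds_neBot hne
  exact ⟨hub, hLI ▸ htd⟩

/-- Lemma B : decay of `F` controls displacement outside `K`. -/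
lemma lemB (hF : Differentiable ℝ F) (hy : ∀ s, HasDerivAt y (X (y s)) s)
    (hlyap : ∀ x, fderiv ℝ F x (X x) ≤ 0)
    (hps : ∀ x ∉ K, fderiv ℝ F x (X x) ≤ -ε * ‖X x‖) (hε : 0 < ε)
    {a b : ℝ} (hab : a ≤ b) (hout : ∀ v ∈ Ico a b, y v ∉ K) :
    ε * ‖y b - y a‖ ≤ F (y a) - F (y b) := by
  have hanti : Antitone fun t => F (y t) := by
    refine antitone_of_deriv_nonpos (fun s => (flow_deriv hF hy s).differentiableAt) fun s => ?_
    rw [(flow_deriv hF hy s).deriv]; exact hlyap (y s)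
  have hyc : Continuous y := continuous_iff_continuousAt.2 fun s => (hy s).continuousAt
  rcases eq_or_ne (y b) (y a) with heq | hne
  · rw [heq, sub_self, norm_zero, mul_zero]
    have := hanti hab
    linarith
  set w : E := y b - y a with hw
  have hwne : w ≠ 0 := sub_ne_zero.2 hne
  have hwpos : (0:ℝ) < ‖w‖ := norm_pos_iff.2 hwne
  set u : E := ‖w‖⁻¹ • w with hu
  have hun : ‖u‖ = 1 := norm_smul_inv_norm hwne
  set h : ℝ → ℝ := fun t => F (y t) + ε * ⟪u, y t⟫ with hh
  have hder : ∀ t, HasDerivAt h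
      (fderiv ℝ F (y t) (X (y t)) + ε * ⟪u, X (y t)⟫) t := by
    intro t
    have h1 := flow_deriv hF hy t
    have h2 : HasDerivAt (fun t => ⟪u, y t⟫) (⟪u, X (y t)⟫) t := by
      have := (innerSL ℝ u).hasFDerivAt.comp_hasDerivAt t (hy t)
      simpa [Function.comp_def] using this
    exact h1.add (h2.const_mul ε)
  have hmono : AntitoneOn h (Icc a b) := by
    refine antitoneOn_of_deriv_nonpos (convex_Icc a b)
      (((hF.continuous.comp hyc).add
        (continuous_const.mul (Continuous.inner continuous_const hyc))).continuousOn)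
      (fun v _ => (hder v).differentiableAt.differentiableWithinAt) ?_
    intro v hv
    rw [interior_Icc] at hv
    have hvK : y v ∉ K := hout v (Ioo_subset_Ico_self hv)
    rw [(hder v).deriv]
    have h3 : fderiv ℝ F (y v) (X (y v)) ≤ -ε * ‖X (y v)‖ := hps _ hvK
    have h4 : ⟪u, X (y v)⟫ ≤ ‖X (y v)‖ := by
      calc ⟪u, X (y v)⟫ ≤ ‖u‖ * ‖X (y v)‖ := real_inner_le_norm _ _
      _ = ‖X (y v)‖ := by rw [hun, one_mul]
    nlinarith
  have hba : h b ≤ h a := hmono (left_mem_Icc.2 hab) (right_mem_Icc.2 hab) hab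
  have hiw : ⟪u, y b⟫ - ⟪u, y a⟫ = ‖w‖ := by
    rw [← inner_sub_right, ← hw, hu, real_inner_smul_left, real_inner_self_eq_norm_mul_norm]
    field_simp
  have : ε * (⟪u, y b⟫ - ⟪u, y a⟫) ≤ F (y a) - F (y b) := by
    simp only [hh] at hba; linarith
  rw [hiw] at this
  exact this

lemma psi_deriv {v : E} {c : ℝ} (hy : ∀ s, HasDerivAt y (X (y s)) s) (t : ℝ) :
    HasDerivAt (fun t => ⟪v, y t⟫ - c * t) (⟪v, X (y t)⟫ - c) t := by
  have h1 : HasDerivAt (fun t : ℝ => ⟪v, y t⟫) (⟪v, X (y t)⟫) t := by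
    simpa [Function.comp_def] using (innerSL ℝ v).hasFDerivAt.comp_hasDerivAt t (hy t)
  simpa using h1.fun_sub ((hasDerivAt_id t).const_mul c)

lemma noMotion_atTop (hX : Continuous X) (hy : ∀ s, HasDerivAt y (X (y s)) s)
    (hp : Tendsto y atTop (𝓝 p)) : X p = 0 := by
  by_contra hv
  set v := X p with hvdef
  set c : ℝ := ‖v‖ ^ 2 with hc
  have hvne : v ≠ 0 := hv
  have hcpos : 0 < c := by
    have := norm_pos_iff.2 hvne
    positivity
  set φ : ℝ → ℝ := fun t => ⟪v, y t⟫ with hφ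
  have hyc : Continuous y := continuous_iff_continuousAt.2 fun s => (hy s).continuousAt
  have htd : Tendsto (fun t => ⟪v, X (y t)⟫) atTop (𝓝 ⟪v, X p⟫) :=
    ((Continuous.inner continuous_const hX).continuousAt.tendsto).comp hp
  have hvc : ⟪v, X p⟫ = c := by rw [hc, ← hvdef, real_inner_self_eq_norm_sq]
  have hev : ∀ᶠ t in atTop, c / 2 < ⟪v, X (y t)⟫ := by
    apply htd.eventually
    rw [hvc]
    exact lt_mem_nhds (by linarith)
  obtain ⟨T, hT⟩ := eventually_atTop.1 hev
  set ψ : ℝ → ℝ := fun t => φ t - c / 2 * t with hψ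
  have hψmono : MonotoneOn ψ (Ici T) := by
    refine monotoneOn_of_deriv_nonneg (convex_Ici T) ?_ ?_ ?_
    · exact Continuous.continuousOn
        ((Continuous.inner continuous_const hyc).sub (continuous_const.mul continuous_id))
    · exact fun t _ => (psi_deriv hy t).differentiableAt.differentiableWithinAt
    · intro t ht
      rw [interior_Ici] at ht
      rw [(psi_deriv hy t).deriv]
      have := hT t (le_of_lt ht)
      linarith
  have hφtd : Tendsto φ atTop (𝓝 ⟪v, p⟫) :=
    ((Continuous.inner continuous_const continuous_id).continuousAt.tendsto).comp hp
  set B : ℝ := ⟪v, p⟫ + 1 with hB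
  have hevB : ∀ᶠ t in atTop, φ t ≤ B := by
    apply hφtd.eventually (Iic_mem_nhds (by linarith : ⟪v, p⟫ < B))
  -- pick a large time
  obtain ⟨TB, hTB⟩ := eventually_atTop.1 hevB
  set t : ℝ := max (max T TB) (T + (B - φ T + 1) * (2 / c)) with ht
  have htT : T ≤ t := le_trans (le_max_left _ _) (le_max_left _ _)
  have htTB : TB ≤ t := le_trans (le_max_right _ _) (le_max_left _ _)
  have ht2 : T + (B - φ T + 1) * (2 / c) ≤ t := le_max_right _ _
  have h1 : ψ T ≤ ψ t := hψmono self_mem_Ici htT htT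
  have h2 : φ T - c / 2 * T ≤ φ t - c / 2 * t := h1
  have h3 : φ t ≤ B := hTB t htTB
  have h4 : c / 2 * (t - T) ≥ B - φ T + 1 := by
    have h5 : (B - φ T + 1) * (2 / c) ≤ t - T := by linarith
    have h6 : c / 2 * ((B - φ T + 1) * (2 / c)) ≤ c / 2 * (t - T) :=
      mul_le_mul_of_nonneg_left h5 (by linarith)
    have h7 : c / 2 * ((B - φ T + 1) * (2 / c)) = B - φ T + 1 := by
      field_simp
    linarith
  nlinarith

lemma noMotion_atBot (hX : Continuous X) (hy : ∀ s, HasDerivAt y (X (y s)) s)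
    (hp : Tendsto y atBot (𝓝 p)) : X p = 0 := by
  by_contra hv
  set v := X p with hvdef
  set c : ℝ := ‖v‖ ^ 2 with hc
  have hvne : v ≠ 0 := hv
  have hcpos : 0 < c := by
    have := norm_pos_iff.2 hvne
    positivity
  set φ : ℝ → ℝ := fun t => ⟪v, y t⟫ with hφ
  have hyc : Continuous y := continuous_iff_continuousAt.2 fun s => (hy s).continuousAt
  have htd : Tendsto (fun t => ⟪v, X (y t)⟫) atBot (𝓝 ⟪v, X p⟫) :=
    ((Continuous.inner continuous_const hX).continuousAt.tendsto).comp hp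
  have hvc : ⟪v, X p⟫ = c := by rw [hc, ← hvdef, real_inner_self_eq_norm_sq]
  have hev : ∀ᶠ t in atBot, c / 2 < ⟪v, X (y t)⟫ := by
    apply htd.eventually
    rw [hvc]
    exact lt_mem_nhds (by linarith)
  obtain ⟨T, hT⟩ := eventually_atBot.1 hev
  set ψ : ℝ → ℝ := fun t => φ t - c / 2 * t with hψ
  have hψmono : MonotoneOn ψ (Iic T) := by
    refine monotoneOn_of_deriv_nonneg (convex_Iic T) ?_ ?_ ?_
    · exact Continuous.continuousOn
        ((Continuous.inner continuous_const hyc).sub (continuous_const.mul continuous_id))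
    · exact fun t _ => (psi_deriv hy t).differentiableAt.differentiableWithinAt
    · intro t ht
      rw [interior_Iic] at ht
      rw [(psi_deriv hy t).deriv]
      have := hT t (le_of_lt ht)
      linarith
  have hφtd : Tendsto φ atBot (𝓝 ⟪v, p⟫) :=
    ((Continuous.inner continuous_const continuous_id).continuousAt.tendsto).comp hp
  set B : ℝ := ⟪v, p⟫ - 1 with hB
  have hevB : ∀ᶠ t in atBot, B ≤ φ t := by
    apply hφtd.eventually (Ici_mem_nhds (by linarith : B < ⟪v, p⟫))
  obtain ⟨TB, hTB⟩ := eventually_atBot.1 hevB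
  set t : ℝ := min (min T TB) (T - (φ T - B + 1) * (2 / c)) with ht
  have htT : t ≤ T := le_trans (min_le_left _ _) (min_le_left _ _)
  have htTB : t ≤ TB := le_trans (min_le_left _ _) (min_le_right _ _)
  have ht2 : t ≤ T - (φ T - B + 1) * (2 / c) := min_le_right _ _
  have h1 : ψ t ≤ ψ T := hψmono (mem_Iic.2 htT) self_mem_Iic htT
  have h2 : φ t - c / 2 * t ≤ φ T - c / 2 * T := h1
  have h3 : B ≤ φ t := hTB t htTB
  have h4 : c / 2 * (T - t) ≥ φ T - B + 1 := by
    have h5 : (φ T - B + 1) * (2 / c) ≤ T - t := by linarith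
    have h6 : c / 2 * ((φ T - B + 1) * (2 / c)) ≤ c / 2 * (T - t) :=
      mul_le_mul_of_nonneg_left h5 (by linarith)
    have h7 : c / 2 * ((φ T - B + 1) * (2 / c)) = φ T - B + 1 := by
      field_simp
    linarith
  nlinarith

lemma escape_atTop (hF : Differentiable ℝ F) (hy : ∀ s, HasDerivAt y (X (y s)) s)
    (hlyap : ∀ x, fderiv ℝ F x (X x) ≤ 0)
    (hps : ∀ x ∉ K, fderiv ℝ F x (X x) ≤ -ε * ‖X x‖) (hε : 0 < ε)
    (hp : MapClusterPt p atTop y)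
    (hlb : ∀ t, F p ≤ F (y t)) (htd : Tendsto (fun t => F (y t)) atTop (𝓝 (F p)))
    {t₀ : ℝ} (hout : ∀ u, t₀ ≤ u → y u ∉ K) : Tendsto y atTop (𝓝 p) := by
  rw [Metric.tendsto_nhds]
  intro η hη
  have h3 : 0 < η / 3 := by linarith
  have hevF : ∀ᶠ u in atTop, F (y u) < F p + ε * (η / 3) :=
    htd.eventually (Iio_mem_nhds (by nlinarith))
  have hfreq : ∃ᶠ a in atTop, y a ∈ ball p (η / 3) :=
    mapClusterPt_iff_frequently.1 hp _ (ball_mem_nhds p h3)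
  obtain ⟨a, ⟨haball, haF⟩, hat₀⟩ :=
    ((hfreq.and_eventually hevF).and_eventually (eventually_ge_atTop t₀)).exists
  refine eventually_atTop.2 ⟨a, fun b hb => ?_⟩
  have hout' : ∀ v ∈ Ico a b, y v ∉ K := fun v hv => hout v (le_trans hat₀ hv.1)
  have hkey := lemB hF hy hlyap hps hε hb hout'
  have hnorm : ‖y b - y a‖ ≤ η / 3 := by
    have h1 : F (y a) - F (y b) ≤ ε * (η / 3) := by
      have := hlb b; linarith
    exact (mul_le_mul_iff_right₀ hε).1 (le_trans hkey h1)
  have hdab : dist (y b) (y a) = ‖y b - y a‖ := dist_eq_norm _ _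
  have htri := dist_triangle (y b) (y a) p
  have : dist (y a) p < η / 3 := mem_ball.1 haball
  calc dist (y b) p ≤ dist (y b) (y a) + dist (y a) p := htri
  _ < η := by rw [hdab]; linarith

lemma escape_atBot (hF : Differentiable ℝ F) (hy : ∀ s, HasDerivAt y (X (y s)) s)
    (hlyap : ∀ x, fderiv ℝ F x (X x) ≤ 0)
    (hps : ∀ x ∉ K, fderiv ℝ F x (X x) ≤ -ε * ‖X x‖) (hε : 0 < ε)
    (hq : MapClusterPt q atBot y)
    (hub : ∀ t, F (y t) ≤ F q) (htd : Tendsto (fun t => F (y t)) atBot (𝓝 (F q)))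
    {t₀ : ℝ} (hout : ∀ u, u ≤ t₀ → y u ∉ K) : Tendsto y atBot (𝓝 q) := by
  rw [Metric.tendsto_nhds]
  intro η hη
  have h3 : 0 < η / 3 := by linarith
  have hevF : ∀ᶠ u in atBot, F q - ε * (η / 3) < F (y u) :=
    htd.eventually (Ioi_mem_nhds (by nlinarith))
  have hfreq : ∃ᶠ a in atBot, y a ∈ ball q (η / 3) :=
    mapClusterPt_iff_frequently.1 hq _ (ball_mem_nhds q h3)
  obtain ⟨a, ⟨haball, haF⟩, hat₀⟩ :=
    ((hfreq.and_eventually hevF).and_eventually (eventually_le_atBot t₀)).exists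
  refine eventually_atBot.2 ⟨a, fun b hb => ?_⟩
  have hout' : ∀ v ∈ Ico b a, y v ∉ K := fun v hv =>
    hout v (le_trans (le_of_lt hv.2) hat₀)
  have hkey := lemB hF hy hlyap hps hε hb hout'
  have hnorm : ‖y a - y b‖ ≤ η / 3 := by
    have h1 : F (y b) - F (y a) ≤ ε * (η / 3) := by
      have := hub b; linarith
    exact (mul_le_mul_iff_right₀ hε).1 (le_trans hkey h1)
  have hdab : dist (y b) (y a) = ‖y a - y b‖ := by
    rw [dist_eq_norm, norm_sub_rev]
  have htri := dist_triangle (y b) (y a) q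
  have : dist (y a) q < η / 3 := mem_ball.1 haball
  calc dist (y b) q ≤ dist (y b) (y a) + dist (y a) q := htri
  _ < η := by rw [hdab]; linarith


lemma cluster_comp {l : Filter ℝ} {f : E → ℝ} (hf : Continuous f)
    (hp : MapClusterPt p l y) : MapClusterPt (f p) l (fun t => f (y t)) := by
  rw [mapClusterPt_iff_frequently] at *
  intro s hs
  exact (hp _ (hf.continuousAt.preimage_mem_nhds hs)).mono fun a ha => ha

lemma Knonempty {p : E} (hX : Continuous X) (hF : Differentiable ℝ F) (hε : 0 < ε)
    (hzero : ∀ x, X x = 0 → x ∈ K)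
    (hlyap : ∀ x, fderiv ℝ F x (X x) ≤ 0)
    (hps : ∀ x ∉ K, fderiv ℝ F x (X x) ≤ -ε * ‖X x‖)
    (hy : ∀ s, HasDerivAt y (X (y s)) s)
    (hp : MapClusterPt p atTop y) : K.Nonempty := by
  by_cases hc : ∃ u : ℝ, y u ∈ K
  · obtain ⟨u, hu⟩ := hc
    exact ⟨y u, hu⟩
  · push_neg at hc
    have hanti := flow_antitone hF hy hlyap
    obtain ⟨hFp, htop⟩ := anti_cluster_atTop hanti (cluster_comp hF.continuous hp)
    have htdy := escape_atTop hF hy hlyap hps hε hp hFp htop (t₀ := 0) fun u _ => hc u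
    exact ⟨p, hzero p (noMotion_atTop hX hy htdy)⟩

/-- The main distance estimate. -/
lemma part1 (hX : Continuous X) (hF : Differentiable ℝ F) (hK : IsCompact K)
    (hε : 0 < ε) (hzero : ∀ x, X x = 0 → x ∈ K)
    (hlyap : ∀ x, fderiv ℝ F x (X x) ≤ 0)
    (hps : ∀ x ∉ K, fderiv ℝ F x (X x) ≤ -ε * ‖X x‖)
    (hm : ∀ x ∈ K, |F x| ≤ m)
    (hy : ∀ s, HasDerivAt y (X (y s)) s)
    (hp : MapClusterPt p atTop y) (hq : MapClusterPt q atBot y) :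
    ∀ s, infDist (y s) K ≤ 2 * m / ε := by
  have hyc : Continuous y := continuous_iff_continuousAt.2 fun s => (hy s).continuousAt
  have hanti : Antitone fun t => F (y t) := flow_antitone hF hy hlyap
  obtain ⟨hFp, htop⟩ := anti_cluster_atTop hanti (cluster_comp hF.continuous hp)
  obtain ⟨hFq, hbot⟩ := anti_cluster_atBot hanti (cluster_comp hF.continuous hq)
  -- the escape scenario at `atTop`
  have escapeT : ∀ t₀ : ℝ, (∀ u, t₀ ≤ u → y u ∉ K) →
      Tendsto y atTop (𝓝 p) ∧ p ∈ K := by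
    intro t₀ hout
    have htdy := escape_atTop hF hy hlyap hps hε hp hFp htop hout
    exact ⟨htdy, hzero p (noMotion_atTop hX hy htdy)⟩
  have escapeB : ∀ t₀ : ℝ, (∀ u, u ≤ t₀ → y u ∉ K) →
      Tendsto y atBot (𝓝 q) ∧ q ∈ K := by
    intro t₀ hout
    have htdy := escape_atBot hF hy hlyap hps hε hq hFq hbot hout
    exact ⟨htdy, hzero q (noMotion_atBot hX hy htdy)⟩
  -- bound `F p` from below
  have hFpm : -m ≤ F p := by
    by_cases hc : ∀ t : ℝ, ∃ u, t ≤ u ∧ y u ∈ K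
    · by_contra hcon
      push_neg at hcon
      set δ : ℝ := (-m - F p) / 2 with hδ
      have hδpos : 0 < δ := by simp only [hδ]; linarith
      have hev : ∀ᶠ u in atTop, F (y u) < F p + δ :=
        htop.eventually (Iio_mem_nhds (by linarith))
      obtain ⟨T, hT⟩ := eventually_atTop.1 hev
      obtain ⟨u, hu1, hu2⟩ := hc T
      have h1 : -m ≤ F (y u) := (abs_le.1 (hm _ hu2)).1
      have h2 := hT u hu1
      simp only [hδ] at h2
      linarith
    · push_neg at hc
      obtain ⟨t₀, ht₀⟩ := hc
      have hpK : p ∈ K := (escapeT t₀ ht₀).2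
      exact (abs_le.1 (hm _ hpK)).1
  -- bound `F q` from above
  have hFqm : F q ≤ m := by
    by_cases hc : ∀ t : ℝ, ∃ u, u ≤ t ∧ y u ∈ K
    · by_contra hcon
      push_neg at hcon
      set δ : ℝ := (F q - m) / 2 with hδ
      have hδpos : 0 < δ := by simp only [hδ]; linarith
      have hev : ∀ᶠ u in atBot, F q - δ < F (y u) :=
        hbot.eventually (Ioi_mem_nhds (by linarith))
      obtain ⟨T, hT⟩ := eventually_atBot.1 hev
      obtain ⟨u, hu1, hu2⟩ := hc T
      have h1 : F (y u) ≤ m := (abs_le.1 (hm _ hu2)).2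
      have h2 := hT u hu1
      simp only [hδ] at h2
      linarith
    · push_neg at hc
      obtain ⟨t₀, ht₀⟩ := hc
      have hqK : q ∈ K := (escapeB t₀ ht₀).2
      exact (abs_le.1 (hm _ hqK)).2
  -- the pointwise distance estimate
  intro s
  have key : infDist (y s) K ≤ (F (y s) - F p) / ε := by
    by_cases hcase : ∃ u, s ≤ u ∧ y u ∈ K
    · set Sset : Set ℝ := {u | s ≤ u ∧ y u ∈ K} with hS
      have hScl : IsClosed Sset := by
        have : Sset = Ici s ∩ y ⁻¹' K := by
          ext u
          constructor
          · rintro ⟨h1, h2⟩; exact ⟨h1, h2⟩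
          · rintro ⟨h1, h2⟩; exact ⟨h1, h2⟩
        rw [this]
        exact isClosed_Ici.inter (hK.isClosed.preimage hyc)
      have hSbdd : BddBelow Sset := ⟨s, fun u hu => hu.1⟩
      set u₀ : ℝ := sInf Sset with hu₀def
      have hu₀ : u₀ ∈ Sset := hScl.csInf_mem hcase hSbdd
      have hout : ∀ v ∈ Ico s u₀, y v ∉ K := by
        intro v hv hvK
        exact absurd (csInf_le hSbdd ⟨hv.1, hvK⟩) (not_le.2 hv.2)
      have hkey := lemB hF hy hlyap hps hε hu₀.1 hout
      have h1 : F (y s) - F (y u₀) ≤ F (y s) - F p := by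
        have := hFp u₀; linarith
      have h2 : infDist (y s) K ≤ ‖y u₀ - y s‖ := by
        calc infDist (y s) K ≤ dist (y s) (y u₀) := infDist_le_dist_of_mem hu₀.2
        _ = ‖y u₀ - y s‖ := by rw [dist_eq_norm, norm_sub_rev]
      rw [le_div_iff₀ hε, mul_comm]
      calc ε * infDist (y s) K ≤ ε * ‖y u₀ - y s‖ :=
            mul_le_mul_of_nonneg_left h2 (le_of_lt hε)
      _ ≤ F (y s) - F (y u₀) := hkey
      _ ≤ F (y s) - F p := h1
    · push_neg at hcase
      have hout : ∀ u, s ≤ u → y u ∉ K := hcase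
      obtain ⟨htdy, hpK⟩ := escapeT s hout
      have hb : ∀ b, b ≥ s → ε * ‖y b - y s‖ ≤ F (y s) - F p := by
        intro b hbs
        have h1 := lemB hF hy hlyap hps hε hbs fun v hv => hout v hv.1
        have := hFp b
        linarith
      have hlim : Tendsto (fun b => ε * ‖y b - y s‖) atTop (𝓝 (ε * ‖p - y s‖)) := by
        have h1 : Tendsto (fun b => y b - y s) atTop (𝓝 (p - y s)) :=
          htdy.sub tendsto_const_nhds
        exact (h1.norm).const_mul ε
      have h2 : ε * ‖p - y s‖ ≤ F (y s) - F p :=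
        le_of_tendsto hlim (eventually_atTop.2 ⟨s, hb⟩)
      have h3 : infDist (y s) K ≤ ‖p - y s‖ := by
        calc infDist (y s) K ≤ dist (y s) p := infDist_le_dist_of_mem hpK
        _ = ‖p - y s‖ := by rw [dist_eq_norm, norm_sub_rev]
      rw [le_div_iff₀ hε, mul_comm]
      calc ε * infDist (y s) K ≤ ε * ‖p - y s‖ :=
            mul_le_mul_of_nonneg_left h3 (le_of_lt hε)
      _ ≤ F (y s) - F p := h2
  have h4 : (F (y s) - F p) / ε ≤ 2 * m / ε := by
    have h5 : F (y s) - F p ≤ 2 * m := by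
      have := hFq s; linarith
    gcongr
  exact key.trans h4

end Aux

/-- for a tame vector field `X` (with compact set `K`, constant `ε > 0` and
Lyapunov function `F`), every flow line with nonempty ω-limit sets at both ends stays
within distance `2m/ε` of `K`, where `m` bounds `|F|` on `K`; consequently the set `S_X`
of traces of such flow lines is compact. -/
theorem stmt8 (d : ℕ) (X : EuclideanSpace ℝ (Fin d) → EuclideanSpace ℝ (Fin d))
    (hX : Continuous X)
    (F : EuclideanSpace ℝ (Fin d) → ℝ) (hF : Differentiable ℝ F)
    (K : Set (EuclideanSpace ℝ (Fin d))) (hK : IsCompact K)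
    (ε m : ℝ) (hε : 0 < ε)
    (hzero : ∀ x, X x = 0 → x ∈ K)
    (hlyap : ∀ x, fderiv ℝ F x (X x) ≤ 0)
    (hps : ∀ x ∉ K, fderiv ℝ F x (X x) ≤ -ε * ‖X x‖)
    (hm : ∀ x ∈ K, |F x| ≤ m) :
    (∀ y : ℝ → EuclideanSpace ℝ (Fin d), (∀ s, HasDerivAt y (X (y s)) s) →
      (∃ p, MapClusterPt p Filter.atTop y) → (∃ q, MapClusterPt q Filter.atBot y) →
      ∀ s, Metric.infDist (y s) K ≤ 2 * m / ε) ∧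
    ({p | ∃ y : ℝ → EuclideanSpace ℝ (Fin d), (∀ s, HasDerivAt y (X (y s)) s) ∧
        (∃ p', MapClusterPt p' Filter.atTop y) ∧ (∃ q, MapClusterPt q Filter.atBot y) ∧
        ∃ σ : ℝ, y σ = p}
      ⊆ {x | Metric.infDist x K ≤ 2 * m / ε}) ∧
    IsCompact {p | ∃ y : ℝ → EuclideanSpace ℝ (Fin d), (∀ s, HasDerivAt y (X (y s)) s) ∧
        (∃ p', MapClusterPt p' Filter.atTop y) ∧ (∃ q, MapClusterPt q Filter.atBot y) ∧
        ∃ σ : ℝ, y σ = p} := by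
  have part1' : ∀ y : ℝ → EuclideanSpace ℝ (Fin d), (∀ s, HasDerivAt y (X (y s)) s) →
      (∃ p, MapClusterPt p Filter.atTop y) → (∃ q, MapClusterPt q Filter.atBot y) →
      ∀ s, Metric.infDist (y s) K ≤ 2 * m / ε := by
    rintro y hy ⟨p, hp⟩ ⟨q, hq⟩
    exact part1 hX hF hK hε hzero hlyap hps hm hy hp hq
  have hKnonempty : ∀ y : ℝ → EuclideanSpace ℝ (Fin d), (∀ s, HasDerivAt y (X (y s)) s) →
      (∃ p, MapClusterPt p Filter.atTop y) → K.Nonempty := by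
    rintro y hy ⟨p, hp⟩
    exact Knonempty hX hF hε hzero hlyap hps hy hp
  refine ⟨part1', ?_, ?_⟩
  · rintro p ⟨y, hy, hp, hq, σ, rfl⟩
    exact part1' y hy hp hq σ
  rcases Set.eq_empty_or_nonempty {p | ∃ y : ℝ → EuclideanSpace ℝ (Fin d),
      (∀ s, HasDerivAt y (X (y s)) s) ∧
      (∃ p', MapClusterPt p' Filter.atTop y) ∧ (∃ q, MapClusterPt q Filter.atBot y) ∧
      ∃ σ : ℝ, y σ = p} with hS | hS
  · rw [hS]; exact isCompact_empty
  obtain ⟨p₀, y₀, hy₀, hp₀, hq₀, _⟩ := hS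
  have hKne : K.Nonempty := hKnonempty y₀ hy₀ hp₀
  obtain ⟨x₀, hx₀⟩ := hKne
  have hm0 : 0 ≤ m := le_trans (abs_nonneg _) (hm x₀ hx₀)
  set c : ℝ := 2 * m / ε with hcdef
  have hc0 : 0 ≤ c := by positivity
  set K' : Set (EuclideanSpace ℝ (Fin d)) := {x | infDist x K ≤ c} with hK'def
  have hK'cl : IsClosed K' := isClosed_le (continuous_infDist_pt K) continuous_const
  have hK'bd : Bornology.IsBounded K' := by
    obtain ⟨R, hR⟩ := hK.isBounded.subset_closedBall x₀
    apply (Metric.isBounded_closedBall (x := x₀) (r := c + 1 + R)).subset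
    intro x hx
    have h1 : infDist x K < c + 1 := lt_of_le_of_lt hx (by linarith)
    obtain ⟨k, hk, hdk⟩ := (infDist_lt_iff ⟨x₀, hx₀⟩).1 h1
    have h2 : dist k x₀ ≤ R := hR hk
    exact mem_closedBall.2 (by
      calc dist x x₀ ≤ dist x k + dist k x₀ := dist_triangle _ _ _
      _ ≤ c + 1 + R := by linarith)
  have hK'c : IsCompact K' := isCompact_of_isClosed_isBounded hK'cl hK'bd
  have hK'ne : K'.Nonempty := ⟨x₀, by simp [hK'def, infDist_zero_of_mem hx₀, hc0]⟩
  obtain ⟨z, hz, hzmax⟩ := hK'c.exists_isMaxOn hK'ne hX.norm.continuousOn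
  set C : ℝ := ‖X z‖ with hCdef
  have hC0 : 0 ≤ C := norm_nonneg _
  have hC : ∀ x ∈ K', ‖X x‖ ≤ C := fun x hx => hzmax hx
  -- modulus of continuity of `X` on `K'`
  set ω : ℝ → ℝ := fun r => sSup ((fun pr : EuclideanSpace ℝ (Fin d) × EuclideanSpace ℝ (Fin d) =>
      ‖X pr.1 - X pr.2‖) '' {pr | pr.1 ∈ K' ∧ pr.2 ∈ K' ∧ dist pr.1 pr.2 ≤ r}) with hωdef
  have hωbdd : ∀ r : ℝ, BddAbove ((fun pr : EuclideanSpace ℝ (Fin d) × EuclideanSpace ℝ (Fin d) =>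
      ‖X pr.1 - X pr.2‖) '' {pr | pr.1 ∈ K' ∧ pr.2 ∈ K' ∧ dist pr.1 pr.2 ≤ r}) := by
    intro r
    refine ⟨2 * C, ?_⟩
    rintro _ ⟨⟨u, v⟩, ⟨h1, h2, _⟩, rfl⟩
    calc ‖X u - X v‖ ≤ ‖X u‖ + ‖X v‖ := norm_sub_le _ _
    _ ≤ 2 * C := by have := hC u h1; have := hC v h2; linarith
  have hωle : ∀ u v (r : ℝ), u ∈ K' → v ∈ K' → dist u v ≤ r → ‖X u - X v‖ ≤ ω r :=
    fun u v r h1 h2 h3 => le_csSup (hωbdd r) ⟨(u, v), ⟨h1, h2, h3⟩, rfl⟩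
  have hωsmall : ∀ δ : ℝ, 0 < δ → ∃ η > 0, ∀ r : ℝ, r ≤ η → ω r ≤ δ := by
    intro δ hδ
    have huc : UniformContinuousOn X K' := hK'c.uniformContinuousOn_of_continuous hX.continuousOn
    rw [Metric.uniformContinuousOn_iff] at huc
    obtain ⟨η, hη, hη'⟩ := huc δ hδ
    refine ⟨η / 2, by linarith, fun r hr => ?_⟩
    apply Real.sSup_le ?_ hδ.le
    rintro _ ⟨⟨u, v⟩, ⟨h1, h2, h3⟩, rfl⟩
    show ‖X u - X v‖ ≤ δ
    rw [← dist_eq_norm]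
    exact (hη' u h1 v h2 (lt_of_le_of_lt (h3.trans hr) (by linarith))).le
    -- the compact family of trajectories
  set Y : Set (ℝ → (EuclideanSpace ℝ (Fin d))) := {y | (∀ t, y t ∈ K') ∧ (∀ a b : ℝ, dist (y a) (y b) ≤ C * |a - b|) ∧
      (∀ a b : ℝ, ‖y b - y a - (b - a) • X (y a)‖ ≤ |b - a| * ω (C * |b - a|))} with hYdef
  have hYclosed : IsClosed Y := by
    have hrw : Y = (⋂ t : ℝ, {y : ℝ → (EuclideanSpace ℝ (Fin d)) | y t ∈ K'}) ∩
        ((⋂ a : ℝ, ⋂ b : ℝ, {y : ℝ → (EuclideanSpace ℝ (Fin d)) | dist (y a) (y b) ≤ C * |a - b|}) ∩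
         (⋂ a : ℝ, ⋂ b : ℝ, {y : ℝ → (EuclideanSpace ℝ (Fin d)) |
            ‖y b - y a - (b - a) • X (y a)‖ ≤ |b - a| * ω (C * |b - a|)})) := by
      ext y
      simp only [hYdef, mem_setOf_eq, mem_inter_iff, mem_iInter]
    rw [hrw]
    refine IsClosed.inter (isClosed_iInter fun t => hK'cl.preimage (continuous_apply t))
      (IsClosed.inter ?_ ?_)
    · refine isClosed_iInter fun a => isClosed_iInter fun b => ?_
      exact isClosed_le (Continuous.dist (continuous_apply a) (continuous_apply b))
        continuous_const
    · refine isClosed_iInter fun a => isClosed_iInter fun b => ?_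
      refine isClosed_le ?_ continuous_const
      exact (((continuous_apply b).sub (continuous_apply a)).sub
        ((hX.comp (continuous_apply a)).const_smul (b - a))).norm
  -- every element of Y is a flow line
  have hYflow : ∀ y ∈ Y, ∀ s, HasDerivAt y (X (y s)) s := by
    rintro y ⟨hmem, hlip, hcond⟩ s
    rw [hasDerivAt_iff_isLittleO, Asymptotics.isLittleO_iff]
    intro cc hcc
    obtain ⟨η, hη, hsm⟩ := hωsmall cc hcc
    have hball : Metric.closedBall s (η / (C + 1)) ∈ 𝓝 s :=
      Metric.closedBall_mem_nhds s (by positivity)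
    filter_upwards [hball] with b hb
    have hdb : |b - s| ≤ η / (C + 1) := by
      rw [← Real.dist_eq]; exact hb
    have h1 : C * |b - s| ≤ η := by
      have h2 : C * |b - s| ≤ C * (η / (C + 1)) :=
        mul_le_mul_of_nonneg_left hdb hC0
      have h3 : C * (η / (C + 1)) ≤ η := by
        rw [mul_comm, div_mul_eq_mul_div, div_le_iff₀ (by linarith : (0:ℝ) < C + 1)]
        nlinarith
      linarith
    calc ‖y b - y s - (b - s) • X (y s)‖ ≤ |b - s| * ω (C * |b - s|) := hcond s b
    _ ≤ |b - s| * cc := mul_le_mul_of_nonneg_left (hsm _ h1) (abs_nonneg _)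
    _ = cc * ‖b - s‖ := by rw [Real.norm_eq_abs]; ring
  -- flow lines staying in K' belong to Y
  have htraj : ∀ z : ℝ → (EuclideanSpace ℝ (Fin d)), (∀ s, HasDerivAt z (X (z s)) s) → (∀ t, z t ∈ K') → z ∈ Y := by
    intro z hz hzK'
    have hlip : ∀ a b : ℝ, dist (z a) (z b) ≤ C * |a - b| := by
      intro a b
      have hmem : ∀ v ∈ Icc (min a b) (max a b), z v ∈ K' := fun v _ => hzK' v
      have := Convex.norm_image_sub_le_of_norm_hasDerivWithin_le
        (f := z) (f' := fun t => X (z t)) (C := C) (s := Icc (min a b) (max a b))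
        (fun v hv => (hz v).hasDerivWithinAt)
        (fun v hv => hC _ (hzK' v)) (convex_Icc _ _)
        ⟨min_le_right a b, le_max_right a b⟩ ⟨min_le_left a b, le_max_left a b⟩
      rw [dist_eq_norm]
      calc ‖z a - z b‖ ≤ C * ‖a - b‖ := this
      _ = C * |a - b| := by rw [Real.norm_eq_abs]
    refine ⟨hzK', hlip, ?_⟩
    intro a b
    set g : ℝ → (EuclideanSpace ℝ (Fin d)) := fun t => z t - t • X (z a) with hgdef
    have hg : ∀ v, HasDerivAt g (X (z v) - X (z a)) v := by
      intro v
      have h1 : HasDerivAt (fun t : ℝ => t • X (z a)) ((1:ℝ) • X (z a)) v :=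
        (hasDerivAt_id v).smul_const (X (z a))
      simpa using (hz v).fun_sub h1
    have hvb : ∀ v ∈ Icc (min a b) (max a b), |v - a| ≤ |b - a| := by
      intro v hv
      have hmm : max a b - min a b = |b - a| := max_sub_min_eq_abs a b
      have h1 : a ∈ Icc (min a b) (max a b) := ⟨min_le_left a b, le_max_left a b⟩
      rw [abs_sub_le_iff]
      constructor
      · have := hv.2; have := h1.1; linarith [hmm ▸ sub_le_sub hv.2 h1.1]
      · have := h1.2; have := hv.1; linarith [hmm ▸ sub_le_sub h1.2 hv.1]
    have hbound : ∀ v ∈ Icc (min a b) (max a b),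
        ‖X (z v) - X (z a)‖ ≤ ω (C * |b - a|) := by
      intro v hv
      refine hωle _ _ _ (hzK' v) (hzK' a) ?_
      calc dist (z v) (z a) ≤ C * |v - a| := by
            have := hlip v a; linarith
      _ ≤ C * |b - a| := mul_le_mul_of_nonneg_left (hvb v hv) hC0
    have := Convex.norm_image_sub_le_of_norm_hasDerivWithin_le
      (f := g) (f' := fun v => X (z v) - X (z a)) (C := ω (C * |b - a|))
      (s := Icc (min a b) (max a b))
      (fun v hv => (hg v).hasDerivWithinAt) hbound (convex_Icc _ _)
      ⟨min_le_left a b, le_max_left a b⟩ ⟨min_le_right a b, le_max_right a b⟩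
    have hgdiff : g b - g a = z b - z a - (b - a) • X (z a) := by
      simp only [hgdef, sub_smul]
      abel
    rw [hgdiff] at this
    calc ‖z b - z a - (b - a) • X (z a)‖ ≤ ω (C * |b - a|) * ‖b - a‖ := this
    _ = |b - a| * ω (C * |b - a|) := by rw [Real.norm_eq_abs]; ring
  -- elements of Y have cluster points at both ends
  have hYclusterT : ∀ y ∈ Y, ∃ p : (EuclideanSpace ℝ (Fin d)), MapClusterPt p atTop y := by
    rintro y ⟨hmem, -, -⟩
    have h1 : map y atTop ≤ 𝓟 K' :=
      le_principal_iff.2 (mem_map.2 (univ_mem' fun t => hmem t))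
    obtain ⟨p, -, hp⟩ := hK'c.exists_clusterPt h1
    exact ⟨p, hp⟩
  have hYclusterB : ∀ y ∈ Y, ∃ q : (EuclideanSpace ℝ (Fin d)), MapClusterPt q atBot y := by
    rintro y ⟨hmem, -, -⟩
    have h1 : map y atBot ≤ 𝓟 K' :=
      le_principal_iff.2 (mem_map.2 (univ_mem' fun t => hmem t))
    obtain ⟨q, -, hq⟩ := hK'c.exists_clusterPt h1
    exact ⟨q, hq⟩
  -- the trace set is the image of Y under evaluation at 0
  have hSY : {p | ∃ y : ℝ → (EuclideanSpace ℝ (Fin d)), (∀ s, HasDerivAt y (X (y s)) s) ∧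
      (∃ p', MapClusterPt p' Filter.atTop y) ∧ (∃ q, MapClusterPt q Filter.atBot y) ∧
      ∃ σ : ℝ, y σ = p} = (fun y : ℝ → (EuclideanSpace ℝ (Fin d)) => y 0) '' Y := by
    apply subset_antisymm
    · rintro p ⟨y, hy, hp, hq, σ, rfl⟩
      have hshift : ∀ s : ℝ, HasDerivAt (fun t => y (t + σ)) (X (y (s + σ))) s := by
        intro s
        have h2 : HasDerivAt (fun t : ℝ => t + σ) 1 s := (hasDerivAt_id s).add_const σ
        have h3 := (hy (s + σ)).scomp s h2
        simpa [Function.comp_def] using h3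
      have hmem : ∀ t : ℝ, y (t + σ) ∈ K' := fun t => part1' y hy hp hq (t + σ)
      refine ⟨fun t => y (t + σ), htraj _ hshift hmem, by simp⟩
    · rintro _ ⟨y, hyY, rfl⟩
      exact ⟨y, hYflow y hyY, hYclusterT y hyY, hYclusterB y hyY, 0, rfl⟩
  rw [hSY]
  have hYsub : Y ⊆ Set.pi univ (fun _ : ℝ => K') := fun y hy =>
    (Set.mem_univ_pi).2 fun t => hy.1 t
  have hYcomp : IsCompact Y :=
    (isCompact_univ_pi fun _ => hK'c).of_isClosed_subset hYclosed hYsub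
  exact hYcomp.image (continuous_apply 0)
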